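/- Let p be an odd prime and let X ⊆ F_p^d be a finite equilateral set with common squared distance Δ ≠ 0. Then |X| ≤ d + 2. -/

import Mathlib

/-- Let `p` be an odd prime and `X ⊆ 𝔽_p^d` a finite equilateral set with
common squared distance `Δ ≠ 0`. Then `|X| ≤ d + 2`. -/
theorem stmt_3 (p : ℕ) [Fact p.Prime] (hp2 : p ≠ 2) (d : ℕ) (Δ : ZMod p) (hΔ : Δ ≠ 0)
    (X : Finset (Fin d → ZMod p))
    (hX : ∀ x ∈ X, ∀ y ∈ X, x ≠ y → ∑ k, (x k - y k) ^ 2 = Δ) :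
    X.card ≤ d + 2 := by
  classical
  let c : (Fin d → ZMod p) → ((Fin d → ZMod p) × ZMod p × ZMod p) := fun x =>
    (fun k => 2 * x k, -1, Δ - ∑ k, x k ^ 2)
  let B : (Fin d → ZMod p) → ((Fin d → ZMod p) × ZMod p × ZMod p) →ₗ[ZMod p] ZMod p := fun y =>
    { toFun := fun v => (∑ k, v.1 k * y k) + v.2.1 * (∑ k, y k ^ 2) + v.2.2
      map_add' := by
        intro a b
        simp only [Prod.fst_add, Prod.snd_add, Pi.add_apply]
        rw [show (∑ x, (a.1 x + b.1 x) * y x) = ∑ x, (a.1 x * y x + b.1 x * y x) from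
          Finset.sum_congr rfl fun k _ => by ring, Finset.sum_add_distrib]
        ring
      map_smul' := by
        intro m a
        simp only [Prod.smul_fst, Prod.smul_snd, Pi.smul_apply, smul_eq_mul,
          RingHom.id_apply]
        rw [mul_add, mul_add, Finset.mul_sum, Finset.mul_sum]
        congr 2
        · exact Finset.sum_congr rfl fun k _ => by ring
        · rw [← mul_assoc, Finset.mul_sum] }
  have hB : ∀ x y, B y (c x) = Δ - ∑ k, (y k - x k) ^ 2 := by
    intro x y
    simp only [c, B, LinearMap.coe_mk, AddHom.coe_mk]
    have h1 : ∑ k, (y k - x k) ^ 2 = (∑ k, y k ^ 2) - (∑ k, 2 * x k * y k) + ∑ k, x k ^ 2 := by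
      rw [show (∑ k, (y k - x k) ^ 2) = ∑ k, (y k ^ 2 - 2 * x k * y k + x k ^ 2) from
        Finset.sum_congr rfl fun k _ => by ring, Finset.sum_add_distrib, Finset.sum_sub_distrib]
    have h2 : ∑ k, 2 * x k * y k = ∑ k, (2 * x k) * y k := by
      exact Finset.sum_congr rfl fun k _ => by ring
    rw [h1, ← h2]
    ring
  have hli : LinearIndependent (ZMod p) (fun x : X => c x) := by
    rw [Fintype.linearIndependent_iff]
    intro g hg y
    have h0 : B (y : Fin d → ZMod p) (∑ x : X, g x • c x) = 0 := by rw [hg]; simp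
    rw [map_sum] at h0
    simp only [map_smul, smul_eq_mul, hB] at h0
    have hval : ∀ x : X, g x * (Δ - ∑ k, ((y : Fin d → ZMod p) k - (x : Fin d → ZMod p) k) ^ 2)
        = if x = y then g y * Δ else 0 := by
      intro x
      by_cases hxy : x = y
      · subst hxy; simp
      · have hne : (x : Fin d → ZMod p) ≠ (y : Fin d → ZMod p) := by
          exact fun h => hxy (Subtype.ext h)
        have := hX x x.2 y y.2 hne
        have hsym : ∑ k, ((y : Fin d → ZMod p) k - (x : Fin d → ZMod p) k) ^ 2 = Δ := by
          rw [← this]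
          exact Finset.sum_congr rfl fun k _ => by ring
        simp [hxy, hsym]
    rw [Finset.sum_congr rfl fun x _ => hval x] at h0
    rw [Finset.sum_ite_eq' Finset.univ y (fun _ => g y * Δ)] at h0
    simp at h0
    rcases h0 with h | h
    · exact h
    · exact absurd h hΔ
  have hcard := hli.fintype_card_le_finrank
  have hfr : Module.finrank (ZMod p)
      ((Fin d → ZMod p) × ZMod p × ZMod p) = d + 2 := by
    simp [Module.finrank_prod, Module.finrank_self]
  rw [hfr, Fintype.card_coe] at hcard
  exact hcard
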